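/- arXiv:1708.01228 — 2 statements merged into one kernel-verified Lean document; each statement's English description precedes it below -/
import Mathlib

section
/- Let N ≥ 3 and let 1 ≤ K₁ < K₂ ≤ N−1. If a function u : ℝ^N → ℝ satisfies both u(y,z) = ũ₁(|y|,|z|) for the decomposition ℝ^N = ℝ^{K₁} × ℝ^{N−K₁} and u(y,z) = ũ₂(|y|,|z|) for the decomposition ℝ^N = ℝ^{K₂} × ℝ^{N−K₂} (for some functions ũ₁, ũ₂ on [0,∞)²), then u is radial, i.e., |x| = |x'| implies u(x) = u(x'). -/
/-- Norm of the first `K` coordinates of `x ∈ ℝ^N`. -/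
noncomputable def blockNorm (N K : ℕ) (x : EuclideanSpace ℝ (Fin N)) : ℝ :=
  Real.sqrt (∑ i : Fin N, if (i : ℕ) < K then x i ^ 2 else 0)

/-- Norm of the last `N - K` coordinates of `x ∈ ℝ^N`. -/
noncomputable def coblockNorm (N K : ℕ) (x : EuclideanSpace ℝ (Fin N)) : ℝ :=
  Real.sqrt (∑ i : Fin N, if K ≤ (i : ℕ) then x i ^ 2 else 0)

theorem stmt0 (N K₁ K₂ : ℕ) (hN : 3 ≤ N) (hK₁ : 1 ≤ K₁) (hK : K₁ < K₂) (hK₂ : K₂ ≤ N - 1)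
    (u : EuclideanSpace ℝ (Fin N) → ℝ) (u₁ u₂ : ℝ → ℝ → ℝ)
    (h₁ : ∀ x, u x = u₁ (blockNorm N K₁ x) (coblockNorm N K₁ x))
    (h₂ : ∀ x, u x = u₂ (blockNorm N K₂ x) (coblockNorm N K₂ x)) :
    ∀ x x' : EuclideanSpace ℝ (Fin N), ‖x‖ = ‖x'‖ → u x = u x' := by
  have key : ∀ x : EuclideanSpace ℝ (Fin N), u x = u₂ ‖x‖ 0 := by
    intro x
    set a := blockNorm N K₁ x with ha
    set b := coblockNorm N K₁ x with hb
    have hK₁N : K₁ < N := by omega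
    have h0N : 0 < N := by omega
    have ha0 : 0 ≤ a := Real.sqrt_nonneg _
    have hb0 : 0 ≤ b := Real.sqrt_nonneg _
    set i₀ : Fin N := ⟨0, h0N⟩ with hi₀
    set i₁ : Fin N := ⟨K₁, hK₁N⟩ with hi₁
    have hne : i₀ ≠ i₁ := by
      intro h
      have := congrArg Fin.val h
      simp only [hi₀, hi₁] at this
      omega
    set q : EuclideanSpace ℝ (Fin N) := WithLp.toLp 2 (fun i => if i = i₀ then a else if i = i₁ then b else 0)
      with hq
    have hsum : ∀ (P : ℕ → Prop) [DecidablePred P],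
        (∑ i : Fin N, if P (i : ℕ) then q i ^ 2 else 0)
        = (if P 0 then a ^ 2 else 0) + (if P K₁ then b ^ 2 else 0) := by
      intro P _
      rw [← Finset.sum_subset (Finset.subset_univ ({i₀, i₁} : Finset (Fin N)))]
      · rw [Finset.sum_pair hne]
        have e0 : q i₀ = a := by rw [hq]; simp
        have e1 : q i₁ = b := by rw [hq]; simp [hne.symm]
        rw [e0, e1]
      · intro i _ hi
        simp only [Finset.mem_insert, Finset.mem_singleton, not_or] at hi
        simp [hq, hi.1, hi.2]
    have bq1 : blockNorm N K₁ q = a := by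
      rw [blockNorm, hsum (fun n => n < K₁)]
      rw [if_pos (show 0 < K₁ by omega), if_neg (lt_irrefl K₁), add_zero, Real.sqrt_sq ha0]
    have cq1 : coblockNorm N K₁ q = b := by
      rw [coblockNorm, hsum (fun n => K₁ ≤ n)]
      rw [if_neg (by omega : ¬ K₁ ≤ 0), if_pos le_rfl, zero_add, Real.sqrt_sq hb0]
    have bq2 : blockNorm N K₂ q = Real.sqrt (a ^ 2 + b ^ 2) := by
      rw [blockNorm, hsum (fun n => n < K₂)]
      rw [if_pos (by omega : 0 < K₂), if_pos hK]
    have cq2 : coblockNorm N K₂ q = 0 := by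
      rw [coblockNorm, hsum (fun n => K₂ ≤ n)]
      rw [if_neg (by omega : ¬ K₂ ≤ 0), if_neg (by omega : ¬ K₂ ≤ K₁), add_zero,
        Real.sqrt_zero]
    have hab : a ^ 2 + b ^ 2 = ‖x‖ ^ 2 := by
      have hsa : a ^ 2 = ∑ i : Fin N, if (i : ℕ) < K₁ then x i ^ 2 else 0 := by
        rw [ha, blockNorm, Real.sq_sqrt]
        exact Finset.sum_nonneg fun i _ => by positivity
      have hsb : b ^ 2 = ∑ i : Fin N, if K₁ ≤ (i : ℕ) then x i ^ 2 else 0 := by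
        rw [hb, coblockNorm, Real.sq_sqrt]
        exact Finset.sum_nonneg fun i _ => by positivity
      rw [hsa, hsb, ← Finset.sum_add_distrib, EuclideanSpace.norm_eq, Real.sq_sqrt
        (Finset.sum_nonneg fun i _ => by positivity)]
      apply Finset.sum_congr rfl
      intro i _
      rcases lt_or_ge (i : ℕ) K₁ with h | h
      · rw [if_pos h, if_neg (by omega), add_zero, Real.norm_eq_abs, sq_abs]
      · rw [if_neg (by omega), if_pos h, zero_add, Real.norm_eq_abs, sq_abs]
    have hsqrt : Real.sqrt (a ^ 2 + b ^ 2) = ‖x‖ := by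
      rw [hab, Real.sqrt_sq (norm_nonneg x)]
    calc u x = u₁ a b := h₁ x
      _ = u q := by rw [h₁ q, bq1, cq1]
      _ = u₂ ‖x‖ 0 := by rw [h₂ q, bq2, cq2, hsqrt]
  intro x x' h
  rw [key x, key x', h]
end

section
/- Let N ≥ 3, A > 0, 0 < α < 2N−2, and let u ∈ D^{1,2}(ℝ^N) be radial with ∫_{ℝ^N} |x|^{−α}u² dx < ∞. Define ‖u‖_A² = ∫|∇u|² dx + A∫|x|^{−α}u² dx and 2*_α = 2(2N−2+α)/(2N−2−α). If |u(x)| ≤ (2/σ_N)^{1/2} A^{−1/4} ‖u‖_A |x|^{−(2N−2−α)/4} a.e. (the radial decay estimate), then ∫_{ℝ^N} |u|^{2*_α} dx ≤ (2/σ_N)^{2α/(2N−2−α)} A^{−(2N−2)/(2N−2−α)} ‖u‖_A^{2*_α}. -/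
open MeasureTheory

theorem stmt18 (N : ℕ) (hN : 3 ≤ N) (A α : ℝ) (hA : 0 < A) (hα : 0 < α)
    (hα2 : α < 2 * (N:ℝ) - 2)
    (u : EuclideanSpace ℝ (Fin N) → ℝ)
    (hrad : ∀ x x', ‖x‖ = ‖x'‖ → u x = u x')
    (hD : MemLp u (ENNReal.ofReal (2 * (N:ℝ) / ((N:ℝ) - 2))))
    (hgrad : Integrable (fun x => ‖fderiv ℝ u x‖ ^ 2))
    (hwt : Integrable (fun x => ‖x‖ ^ (-α) * (u x) ^ 2))
    (normA σN twoStarA : ℝ) (hnorm0 : 0 ≤ normA)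
    (hnormA : normA ^ 2 = (∫ x, ‖fderiv ℝ u x‖ ^ 2) + A * ∫ x, ‖x‖ ^ (-α) * (u x) ^ 2)
    (hσ : σN = (N:ℝ) * (volume (Metric.ball (0 : EuclideanSpace ℝ (Fin N)) 1)).toReal)
    (hts : twoStarA = 2 * (2 * (N:ℝ) - 2 + α) / (2 * (N:ℝ) - 2 - α))
    (hbound : ∀ᵐ x : EuclideanSpace ℝ (Fin N) ∂volume,
      |u x| ≤ (2 / σN) ^ ((1:ℝ) / 2) * A ^ (-(1:ℝ) / 4) * normA * ‖x‖ ^ (-(2 * (N:ℝ) - 2 - α) / 4)) :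
    ∫ x, |u x| ^ twoStarA
      ≤ (2 / σN) ^ (2 * α / (2 * (N:ℝ) - 2 - α)) *
          A ^ (-(2 * (N:ℝ) - 2) / (2 * (N:ℝ) - 2 - α)) * normA ^ twoStarA := by
  have hN3 : (3:ℝ) ≤ (N:ℝ) := by exact_mod_cast hN
  set d : ℝ := 2 * (N:ℝ) - 2 - α with hd
  have hdpos : 0 < d := by simp only [hd]; linarith
  have hσpos : 0 < σN := by
    rw [hσ]
    have h1 : (0:ℝ) < (volume (Metric.ball (0 : EuclideanSpace ℝ (Fin N)) 1)).toReal := by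
      apply ENNReal.toReal_pos
      · exact (Metric.measure_ball_pos volume 0 one_pos).ne'
      · exact measure_ball_lt_top.ne
    positivity
  have hσ2 : (0:ℝ) < 2 / σN := by positivity
  set C : ℝ := (2 / σN) ^ ((1:ℝ) / 2) * A ^ (-(1:ℝ) / 4) * normA with hC
  have hC0 : 0 ≤ C := by positivity
  set s : ℝ := twoStarA - 2 with hs
  have hsval : s = 4 * α / d := by
    rw [hs, hts]; field_simp; ring
  have hspos : 0 < s := by rw [hsval]; exact div_pos (by positivity) hdpos
  have htpos : 0 < twoStarA := by rw [hts]; apply div_pos (by linarith) hdpos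
  -- pointwise bound
  have hpt : ∀ᵐ x : EuclideanSpace ℝ (Fin N) ∂volume,
      |u x| ^ twoStarA ≤ C ^ s * (‖x‖ ^ (-α) * (u x) ^ 2) := by
    filter_upwards [hbound] with x hx
    have hxe : (C * ‖x‖ ^ (-d / 4)) ^ s = C ^ s * ‖x‖ ^ (-α) := by
      rw [Real.mul_rpow hC0 (Real.rpow_nonneg (norm_nonneg x) _),
        ← Real.rpow_mul (norm_nonneg x)]
      have he : -d / 4 * s = -α := by
        rw [hsval]; field_simp
      rw [he]
    have h1 : |u x| ^ s ≤ C ^ s * ‖x‖ ^ (-α) := by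
      rw [← hxe]
      exact Real.rpow_le_rpow (abs_nonneg _) hx hspos.le
    have h2 : |u x| ^ twoStarA = |u x| ^ s * (u x) ^ 2 := by
      have := Real.rpow_add' (abs_nonneg (u x)) (y := s) (z := 2) (by linarith)
      rw [show s + 2 = twoStarA by rw [hs]; ring] at this
      rw [this, Real.rpow_two, sq_abs]
    rw [h2]
    calc |u x| ^ s * (u x) ^ 2 ≤ (C ^ s * ‖x‖ ^ (-α)) * (u x) ^ 2 :=
          mul_le_mul_of_nonneg_right h1 (sq_nonneg _)
      _ = C ^ s * (‖x‖ ^ (-α) * (u x) ^ 2) := by ring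
  have hint : ∫ x, |u x| ^ twoStarA ≤ ∫ x, C ^ s * (‖x‖ ^ (-α) * (u x) ^ 2) := by
    apply integral_mono_of_nonneg
    · filter_upwards with x; exact Real.rpow_nonneg (abs_nonneg _) _
    · exact hwt.const_mul _
    · exact hpt
  rw [integral_const_mul] at hint
  have hwt0 : 0 ≤ ∫ x, ‖x‖ ^ (-α) * (u x) ^ 2 := by
    apply integral_nonneg; intro x
    exact mul_nonneg (Real.rpow_nonneg (norm_nonneg x) _) (sq_nonneg _)
  have hwt1 : ∫ x, ‖x‖ ^ (-α) * (u x) ^ 2 ≤ normA ^ 2 / A := by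
    rw [le_div_iff₀ hA]
    have hg0 : 0 ≤ ∫ x, ‖fderiv ℝ u x‖ ^ 2 := by
      apply integral_nonneg; intro x; positivity
    nlinarith [hnormA]
  have hfinal : C ^ s * ∫ x, ‖x‖ ^ (-α) * (u x) ^ 2
      ≤ (2 / σN) ^ (2 * α / d) * A ^ (-(2 * (N:ℝ) - 2) / d) * normA ^ twoStarA := by
    have hCs : C ^ s = (2 / σN) ^ (s / 2) * A ^ (-s / 4) * normA ^ s := by
      rw [hC, Real.mul_rpow (by positivity) hnorm0,
        Real.mul_rpow (by positivity) (by positivity),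
        ← Real.rpow_mul hσ2.le, ← Real.rpow_mul hA.le]
      ring_nf
    have key : C ^ s * (normA ^ 2 / A)
        = (2 / σN) ^ (2 * α / d) * A ^ (-(2 * (N:ℝ) - 2) / d) * normA ^ twoStarA := by
      rw [hCs]
      have e1 : s / 2 = 2 * α / d := by rw [hsval]; ring
      have e2 : normA ^ s * normA ^ (2:ℝ) = normA ^ twoStarA := by
        rw [← Real.rpow_add' hnorm0 (by rw [show s + 2 = twoStarA by rw [hs]; ring]; exact htpos.ne')]
        congr 1; rw [hs]; ring
      have e3 : A ^ (-s / 4) * A ^ (-1 : ℝ) = A ^ (-(2 * (N:ℝ) - 2) / d) := by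
        rw [← Real.rpow_add hA]
        congr 1
        rw [hsval]
        field_simp
        ring
      calc (2 / σN) ^ (s / 2) * A ^ (-s / 4) * normA ^ s * (normA ^ 2 / A)
          = (2 / σN) ^ (s / 2) * (A ^ (-s / 4) * A ^ (-1 : ℝ)) * (normA ^ s * normA ^ (2:ℝ)) := by
            rw [Real.rpow_neg_one, Real.rpow_two]; ring
        _ = (2 / σN) ^ (2 * α / d) * A ^ (-(2 * (N:ℝ) - 2) / d) * normA ^ twoStarA := by
            rw [e1, e2, e3]
    calc C ^ s * ∫ x, ‖x‖ ^ (-α) * (u x) ^ 2 ≤ C ^ s * (normA ^ 2 / A) := by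
          apply mul_le_mul_of_nonneg_left hwt1 (Real.rpow_nonneg hC0 _)
      _ = _ := key
  exact hint.trans hfinal
end
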